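/- Let k₂, k₃ ∈ ℝ and define vector fields f, g : ℝ⁴ → ℝ⁴ by f(x) = k₂ x₃ • (0, 0, −1, 1) + k₃ x₄ • (0, 1, 0, −1) and g(x) = x₁ x₂ • (−1, 0, 1, 0). Then for every x ∈ ℝ⁴, [f, [f, g]](x) = x₁ • (−k₂ k₃ x₃ + k₃² x₄, k₂ k₃ x₂, k₂² x₂ − k₃² x₄ + k₂ k₃ x₃ + 2 k₂ k₃ x₄, −k₂ (k₂ x₂ + k₃ x₂ + 2 k₃ x₄)). (Second-order Lie bracket computation for the consecutive reaction X₁ + X₂ → X₂ + X₃, X₃ → X₄, X₄ → X₂.) -/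

import Mathlib

/-- The Lie bracket of two vector fields on `ℝ⁴`:
`[φ,ψ](x) = Dψ(x)(φ(x)) − Dφ(x)(ψ(x))`. -/
noncomputable def lieBracket (φ ψ : (Fin 4 → ℝ) → (Fin 4 → ℝ))
    (x : Fin 4 → ℝ) : Fin 4 → ℝ :=
  fderiv ℝ ψ x (φ x) - fderiv ℝ φ x (ψ x)

/-- Drift vector field `f(x) = k₂ x₃ • (0,0,−1,1) + k₃ x₄ • (0,1,0,−1)` of the
consecutive reaction `X₁ + X₂ → X₂ + X₃`, `X₃ → X₄`, `X₄ → X₂`. -/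
noncomputable def drift (k₂ k₃ : ℝ) (x : Fin 4 → ℝ) : Fin 4 → ℝ :=
  (k₂ * x 2) • ![0, 0, -1, 1] + (k₃ * x 3) • ![0, 1, 0, -1]

/-- Control vector field `g(x) = x₁ x₂ • (−1, 0, 1, 0)`. -/
noncomputable def ctrl (x : Fin 4 → ℝ) : Fin 4 → ℝ :=
  (x 0 * x 1) • ![-1, 0, 1, 0]

noncomputable def proj4 (i : Fin 4) : (Fin 4 → ℝ) →L[ℝ] ℝ :=
  ContinuousLinearMap.proj i

noncomputable def driftD (k₂ k₃ : ℝ) : (Fin 4 → ℝ) →L[ℝ] (Fin 4 → ℝ) :=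
  (k₂ • proj4 2).smulRight ![0, 0, -1, 1] + (k₃ • proj4 3).smulRight ![0, 1, 0, -1]

lemma drift_hasFDerivAt (k₂ k₃ : ℝ) (x : Fin 4 → ℝ) :
    HasFDerivAt (drift k₂ k₃) (driftD k₂ k₃) x := by
  unfold drift driftD
  exact (((proj4 2).hasFDerivAt.const_mul k₂).smul_const _).add
    (((proj4 3).hasFDerivAt.const_mul k₃).smul_const _)

lemma hasFDerivAt_bil (a : ℝ) (i j : Fin 4) (c : Fin 4 → ℝ) (x : Fin 4 → ℝ) :
    HasFDerivAt (fun y : Fin 4 → ℝ => (a * (y i * y j)) • c)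
      (((a * x i) • proj4 j + (a * x j) • proj4 i).smulRight c) x := by
  have h1 : HasFDerivAt (fun y : Fin 4 → ℝ => a * (y i * y j))
      ((a * x i) • proj4 j + (a * x j) • proj4 i) x := by
    have h := (((proj4 i).hasFDerivAt (x := x)).mul
      ((proj4 j).hasFDerivAt (x := x))).const_mul a
    refine h.congr_fderiv ?_
    ext v
    simp [proj4]
    ring
  exact h1.smul_const c

lemma ctrl_hasFDerivAt (x : Fin 4 → ℝ) :
    HasFDerivAt ctrl ((x 0 • proj4 1 + x 1 • proj4 0).smulRight ![-1, 0, 1, 0]) x := by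
  unfold ctrl
  exact (((proj4 0).hasFDerivAt (x := x)).mul ((proj4 1).hasFDerivAt (x := x))).smul_const _

lemma inner_eq (k₂ k₃ : ℝ) :
    lieBracket (drift k₂ k₃) ctrl = fun x =>
      (k₃ * (x 0 * x 3)) • ![-1, 0, 1, 0] + (k₂ * (x 0 * x 1)) • ![0, 0, 1, -1] := by
  funext x
  unfold lieBracket
  rw [(drift_hasFDerivAt k₂ k₃ x).fderiv, (ctrl_hasFDerivAt x).fderiv]
  funext i
  fin_cases i <;>
    simp [drift, ctrl, driftD, proj4, Fin.sum_univ_four] <;> ring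

/-- `[f, [f, g]](x) = x₁ • (−k₂k₃x₃ + k₃²x₄, k₂k₃x₂,
k₂²x₂ − k₃²x₄ + k₂k₃x₃ + 2k₂k₃x₄, −k₂(k₂x₂ + k₃x₂ + 2k₃x₄))` for every `x ∈ ℝ⁴`. -/
theorem lieBracket_drift_lieBracket (k₂ k₃ : ℝ) (x : Fin 4 → ℝ) :
    lieBracket (drift k₂ k₃) (lieBracket (drift k₂ k₃) ctrl) x =
      x 0 • ![-(k₂ * k₃ * x 2) + k₃ ^ 2 * x 3,
        k₂ * k₃ * x 1,
        k₂ ^ 2 * x 1 - k₃ ^ 2 * x 3 + k₂ * k₃ * x 2 + 2 * k₂ * k₃ * x 3,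
        -(k₂ * (k₂ * x 1 + k₃ * x 1 + 2 * k₃ * x 3))] := by
  rw [inner_eq]
  have hh : HasFDerivAt (fun x : Fin 4 → ℝ =>
      (k₃ * (x 0 * x 3)) • (![-1, 0, 1, 0] : Fin 4 → ℝ) +
        (k₂ * (x 0 * x 1)) • (![0, 0, 1, -1] : Fin 4 → ℝ))
      ((((k₃ * x 0) • proj4 3 + (k₃ * x 3) • proj4 0).smulRight ![-1, 0, 1, 0]) +
       (((k₂ * x 0) • proj4 1 + (k₂ * x 1) • proj4 0).smulRight ![0, 0, 1, -1])) x :=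
    (hasFDerivAt_bil k₃ 0 3 _ x).add (hasFDerivAt_bil k₂ 0 1 _ x)
  unfold lieBracket
  rw [(drift_hasFDerivAt k₂ k₃ x).fderiv, hh.fderiv]
  funext i
  fin_cases i <;>
    simp [drift, driftD, proj4, Fin.sum_univ_four] <;> ring
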